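/- For all integers n ≥ 0, k ≥ 0, m with −1 ≤ m ≤ n+1, and l with −1 ≤ l ≤ k+1, the Lie bracket of the vector fields A(m,n) and A(l,k) satisfies [A(m,n), A(l,k)] = (n+k+2)·( (l+1)/(k+2) − (m+1)/(n+2) )·A(m+l, n+k). (Part of Lemma 2.1.) -/

import Mathlib

/-- Monomial `x^a * y^b` for integer exponents, zero if an exponent is negative. -/
noncomputable def M (a b : ℤ) : ℝ × ℝ → ℝ :=
  fun p => if 0 ≤ a ∧ 0 ≤ b then p.1 ^ a.toNat * p.2 ^ b.toNat else 0

/-- The vector field `A(l,k)`. -/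
noncomputable def A (l k : ℤ) : ℝ × ℝ → ℝ × ℝ :=
  fun p => (((k : ℝ) - (l : ℝ) + 1) / ((k : ℝ) + 2) * M (l + 1) (k - l) p,
            -(((l : ℝ) + 1) / ((k : ℝ) + 2)) * M l (k - l + 1) p)

/-- The vector field `B(l,k)`. -/
noncomputable def B (l k : ℤ) : ℝ × ℝ → ℝ × ℝ :=
  fun p => (M (l + 1) (k - l) p, M l (k - l + 1) p)

/-- The scalar monomial function `Z(l,k)`. -/
noncomputable def Z (l k : ℤ) : ℝ × ℝ → ℝ := M l (k - l)

/-- Lie bracket of planar vector fields: `[X,Y](p) = DY(p)(X(p)) - DX(p)(Y(p))`. -/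
noncomputable def lieBracket (X Y : ℝ × ℝ → ℝ × ℝ) : ℝ × ℝ → ℝ × ℝ :=
  fun p => fderiv ℝ Y p (X p) - fderiv ℝ X p (Y p)

/-- The (candidate) Fréchet derivative of `M a b` at `p`. -/
noncomputable def DM (a b : ℤ) (p : ℝ × ℝ) : ℝ × ℝ →L[ℝ] ℝ :=
  ((a : ℝ) * M (a-1) b p) • ContinuousLinearMap.fst ℝ ℝ ℝ +
  ((b : ℝ) * M a (b-1) p) • ContinuousLinearMap.snd ℝ ℝ ℝ

lemma M_zero {a b : ℤ} (h : ¬ (0 ≤ a ∧ 0 ≤ b)) (p : ℝ × ℝ) : M a b p = 0 := by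
  simp [M, h]

lemma M_pos {a b : ℤ} (ha : 0 ≤ a) (hb : 0 ≤ b) (p : ℝ × ℝ) :
    M a b p = p.1 ^ a.toNat * p.2 ^ b.toNat := by
  simp [M, ha, hb]

lemma hasFDerivAt_M (a b : ℤ) (p : ℝ × ℝ) : HasFDerivAt (M a b) (DM a b p) p := by
  by_cases h : 0 ≤ a ∧ 0 ≤ b
  · obtain ⟨ha, hb⟩ := h
    have hM : M a b = fun q : ℝ × ℝ => q.1 ^ a.toNat * q.2 ^ b.toNat := by
      funext q; simp [M, ha, hb]
    have h1 : HasFDerivAt (fun q : ℝ × ℝ => q.1 ^ a.toNat)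
        (((a.toNat : ℝ) * p.1 ^ (a.toNat - 1)) • ContinuousLinearMap.fst ℝ ℝ ℝ) p :=
      (hasDerivAt_pow a.toNat p.1).comp_hasFDerivAt p hasFDerivAt_fst
    have h2 : HasFDerivAt (fun q : ℝ × ℝ => q.2 ^ b.toNat)
        (((b.toNat : ℝ) * p.2 ^ (b.toNat - 1)) • ContinuousLinearMap.snd ℝ ℝ ℝ) p :=
      (hasDerivAt_pow b.toNat p.2).comp_hasFDerivAt p hasFDerivAt_snd
    have h3 := h1.mul h2
    rw [hM]
    have hca : (a : ℝ) * M (a-1) b p = (a.toNat : ℝ) * p.1 ^ (a.toNat - 1) * p.2 ^ b.toNat := by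
      rcases eq_or_lt_of_le ha with h0 | h0
      · simp [← h0]
      · rw [M_pos (by omega) hb]
        rw [show (a-1).toNat = a.toNat - 1 by omega, show ((a:ℝ)) = (a.toNat : ℝ) by
          norm_cast; omega]
        ring
    have hcb : (b : ℝ) * M a (b-1) p = (b.toNat : ℝ) * p.2 ^ (b.toNat - 1) * p.1 ^ a.toNat := by
      rcases eq_or_lt_of_le hb with h0 | h0
      · simp [← h0]
      · rw [M_pos ha (by omega)]
        rw [show (b-1).toNat = b.toNat - 1 by omega, show ((b:ℝ)) = (b.toNat : ℝ) by
          norm_cast; omega]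
        ring
    refine h3.congr_fderiv ?_
    refine ContinuousLinearMap.ext fun v => ?_
    simp [DM, hca, hcb]
    ring
  · have hM : M a b = (0 : ℝ × ℝ → ℝ) := by funext q; exact M_zero h q
    rw [hM]
    have hz : DM a b p = 0 := by
      have h1 : (a : ℝ) * M (a-1) b p = 0 := by
        by_cases ha : 0 ≤ a
        · rw [M_zero (by tauto) p]; ring
        · rw [M_zero (by omega) p]; ring
      have h2 : (b : ℝ) * M a (b-1) p = 0 := by
        by_cases hb : 0 ≤ b
        · rw [M_zero (by tauto) p]; ring
        · rw [M_zero (by omega) p]; ring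
      rw [DM, h1, h2]; simp
    rw [hz]
    exact hasFDerivAt_const _ _

/-- The (candidate) Fréchet derivative of `A l k` at `p`. -/
noncomputable def DA (l k : ℤ) (p : ℝ × ℝ) : ℝ × ℝ →L[ℝ] ℝ × ℝ :=
  ((((k:ℝ)-(l:ℝ)+1)/((k:ℝ)+2)) • DM (l+1) (k-l) p).prod
    ((-(((l:ℝ)+1)/((k:ℝ)+2))) • DM l (k-l+1) p)

lemma hasFDerivAt_A (l k : ℤ) (p : ℝ × ℝ) : HasFDerivAt (A l k) (DA l k p) p :=
  (HasFDerivAt.prodMk ((hasFDerivAt_M (l+1) (k-l) p).const_mul _) ((hasFDerivAt_M l (k-l+1) p).const_mul _))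

lemma M_mul' (coeff : ℝ) (a b c d e f : ℤ) (p : ℝ × ℝ) (he : a + c = e) (hf : b + d = f)
    (h : coeff = 0 ∨ (0 ≤ a ∧ 0 ≤ b ∧ 0 ≤ c ∧ 0 ≤ d)) :
    coeff * (M a b p * M c d p) = coeff * M e f p := by
  subst he; subst hf
  rcases h with h | ⟨ha, hb, hc, hd⟩
  · simp [h]
  · rw [M_pos ha hb, M_pos hc hd, M_pos (by omega) (by omega),
      show (a+c).toNat = a.toNat + c.toNat by omega,
      show (b+d).toNat = b.toNat + d.toNat by omega, pow_add, pow_add]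
    ring

/-- `[A(m,n), A(l,k)] = (n+k+2)((l+1)/(k+2) - (m+1)/(n+2)) • A(m+l, n+k)`. -/
theorem stmt2 (n k m l : ℤ) (hn : 0 ≤ n) (hk : 0 ≤ k) (hm : -1 ≤ m) (hmn : m ≤ n + 1)
    (hl : -1 ≤ l) (hlk : l ≤ k + 1) :
    lieBracket (A m n) (A l k) =
      fun p => (((n : ℝ) + (k : ℝ) + 2) *
          (((l : ℝ) + 1) / ((k : ℝ) + 2) - ((m : ℝ) + 1) / ((n : ℝ) + 2))) •
        A (m + l) (n + k) p := by
  have hn2 : ((n:ℝ) + 2) ≠ 0 := by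
    have : (0:ℝ) ≤ (n:ℝ) := by exact_mod_cast hn
    linarith
  have hk2 : ((k:ℝ) + 2) ≠ 0 := by
    have : (0:ℝ) ≤ (k:ℝ) := by exact_mod_cast hk
    linarith
  have hnk2 : ((n:ℝ) + (k:ℝ) + 2) ≠ 0 := by
    have h1 : (0:ℝ) ≤ (n:ℝ) := by exact_mod_cast hn
    have h2 : (0:ℝ) ≤ (k:ℝ) := by exact_mod_cast hk
    linarith
  funext p
  simp only [lieBracket]
  rw [(hasFDerivAt_A l k p).fderiv, (hasFDerivAt_A m n p).fderiv]
  simp only [DA, DM, A, ContinuousLinearMap.prod_apply, ContinuousLinearMap.smul_apply,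
    ContinuousLinearMap.add_apply, ContinuousLinearMap.coe_fst', ContinuousLinearMap.coe_snd',
    Prod.smul_mk, Prod.mk_sub_mk, smul_eq_mul, Prod.mk.injEq, add_sub_cancel_right]
  constructor
  · push_cast
    have h1 : ((k:ℝ)-l+1)/((k:ℝ)+2) * (((l:ℝ)+1) * (((n:ℝ)-m+1)/((n:ℝ)+2))) *
        (M l (k-l) p * M (m+1) (n-m) p) =
        ((k:ℝ)-l+1)/((k:ℝ)+2) * (((l:ℝ)+1) * (((n:ℝ)-m+1)/((n:ℝ)+2))) *
        M (m+l+1) (n+k-(m+l)) p := by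
      refine M_mul' _ _ _ _ _ _ _ _ (by ring) (by ring) ?_
      by_cases hc : 0 ≤ l ∧ 0 ≤ k - l ∧ 0 ≤ m + 1 ∧ 0 ≤ n - m
      · exact Or.inr hc
      · left
        have : l = -1 ∨ l = k + 1 ∨ m = n + 1 := by omega
        rcases this with h | h | h <;> subst h <;> push_cast <;> ring
    have h2 : ((k:ℝ)-l+1)/((k:ℝ)+2) * (((k:ℝ)-l) * (-(((m:ℝ)+1)/((n:ℝ)+2)))) *
        (M (l+1) (k-l-1) p * M m (n-m+1) p) =
        ((k:ℝ)-l+1)/((k:ℝ)+2) * (((k:ℝ)-l) * (-(((m:ℝ)+1)/((n:ℝ)+2)))) *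
        M (m+l+1) (n+k-(m+l)) p := by
      refine M_mul' _ _ _ _ _ _ _ _ (by ring) (by ring) ?_
      by_cases hc : 0 ≤ l + 1 ∧ 0 ≤ k - l - 1 ∧ 0 ≤ m ∧ 0 ≤ n - m + 1
      · exact Or.inr hc
      · left
        have : l = k ∨ l = k + 1 ∨ m = -1 := by omega
        rcases this with h | h | h <;> subst h <;> push_cast <;> ring
    have h3 : -(((n:ℝ)-m+1)/((n:ℝ)+2) * (((m:ℝ)+1) * (((k:ℝ)-l+1)/((k:ℝ)+2)))) *
        (M m (n-m) p * M (l+1) (k-l) p) =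
        -(((n:ℝ)-m+1)/((n:ℝ)+2) * (((m:ℝ)+1) * (((k:ℝ)-l+1)/((k:ℝ)+2)))) *
        M (m+l+1) (n+k-(m+l)) p := by
      refine M_mul' _ _ _ _ _ _ _ _ (by ring) (by ring) ?_
      by_cases hc : 0 ≤ m ∧ 0 ≤ n - m ∧ 0 ≤ l + 1 ∧ 0 ≤ k - l
      · exact Or.inr hc
      · left
        have : m = -1 ∨ m = n + 1 ∨ l = k + 1 := by omega
        rcases this with h | h | h <;> subst h <;> push_cast <;> ring
    have h4 : (((n:ℝ)-m+1)/((n:ℝ)+2) * (((n:ℝ)-m) * (((l:ℝ)+1)/((k:ℝ)+2)))) *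
        (M (m+1) (n-m-1) p * M l (k-l+1) p) =
        (((n:ℝ)-m+1)/((n:ℝ)+2) * (((n:ℝ)-m) * (((l:ℝ)+1)/((k:ℝ)+2)))) *
        M (m+l+1) (n+k-(m+l)) p := by
      refine M_mul' _ _ _ _ _ _ _ _ (by ring) (by ring) ?_
      by_cases hc : 0 ≤ m + 1 ∧ 0 ≤ n - m - 1 ∧ 0 ≤ l ∧ 0 ≤ k - l + 1
      · exact Or.inr hc
      · left
        have : m = n ∨ m = n + 1 ∨ l = -1 := by omega
        rcases this with h | h | h <;> subst h <;> push_cast <;> ring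
    have cid1 : ((k:ℝ)-l+1)/((k:ℝ)+2) * (((l:ℝ)+1) * (((n:ℝ)-m+1)/((n:ℝ)+2)))
        + ((k:ℝ)-l+1)/((k:ℝ)+2) * (((k:ℝ)-l) * (-(((m:ℝ)+1)/((n:ℝ)+2))))
        + (-(((n:ℝ)-m+1)/((n:ℝ)+2) * (((m:ℝ)+1) * (((k:ℝ)-l+1)/((k:ℝ)+2)))))
        + (((n:ℝ)-m+1)/((n:ℝ)+2) * (((n:ℝ)-m) * (((l:ℝ)+1)/((k:ℝ)+2))))
        = ((n:ℝ)+(k:ℝ)+2) * (((l:ℝ)+1)/((k:ℝ)+2) - ((m:ℝ)+1)/((n:ℝ)+2)) *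
          (((n:ℝ)+(k:ℝ)-((m:ℝ)+(l:ℝ))+1)/((n:ℝ)+(k:ℝ)+2)) := by
      field_simp
      ring
    linear_combination h1 + h2 + h3 + h4 + cid1 * M (m+l+1) (n+k-(m+l)) p
  · push_cast
    have h5 : (-(((l:ℝ)+1)/((k:ℝ)+2)) * ((l:ℝ) * (((n:ℝ)-m+1)/((n:ℝ)+2)))) *
        (M (l-1) (k-l+1) p * M (m+1) (n-m) p) =
        (-(((l:ℝ)+1)/((k:ℝ)+2)) * ((l:ℝ) * (((n:ℝ)-m+1)/((n:ℝ)+2)))) *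
        M (m+l) (n+k-(m+l)+1) p := by
      refine M_mul' _ _ _ _ _ _ _ _ (by ring) (by ring) ?_
      by_cases hc : 0 ≤ l - 1 ∧ 0 ≤ k - l + 1 ∧ 0 ≤ m + 1 ∧ 0 ≤ n - m
      · exact Or.inr hc
      · left
        have : l = 0 ∨ l = -1 ∨ m = n + 1 := by omega
        rcases this with h | h | h <;> subst h <;> push_cast <;> ring
    have h6 : (-(((l:ℝ)+1)/((k:ℝ)+2)) * (((k:ℝ)-l+1) * (-(((m:ℝ)+1)/((n:ℝ)+2))))) *
        (M l (k-l) p * M m (n-m+1) p) =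
        (-(((l:ℝ)+1)/((k:ℝ)+2)) * (((k:ℝ)-l+1) * (-(((m:ℝ)+1)/((n:ℝ)+2))))) *
        M (m+l) (n+k-(m+l)+1) p := by
      refine M_mul' _ _ _ _ _ _ _ _ (by ring) (by ring) ?_
      by_cases hc : 0 ≤ l ∧ 0 ≤ k - l ∧ 0 ≤ m ∧ 0 ≤ n - m + 1
      · exact Or.inr hc
      · left
        have : l = -1 ∨ l = k + 1 ∨ m = -1 := by omega
        rcases this with h | h | h <;> subst h <;> push_cast <;> ring
    have h7 : ((((m:ℝ)+1)/((n:ℝ)+2)) * ((m:ℝ) * (((k:ℝ)-l+1)/((k:ℝ)+2)))) *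
        (M (m-1) (n-m+1) p * M (l+1) (k-l) p) =
        ((((m:ℝ)+1)/((n:ℝ)+2)) * ((m:ℝ) * (((k:ℝ)-l+1)/((k:ℝ)+2)))) *
        M (m+l) (n+k-(m+l)+1) p := by
      refine M_mul' _ _ _ _ _ _ _ _ (by ring) (by ring) ?_
      by_cases hc : 0 ≤ m - 1 ∧ 0 ≤ n - m + 1 ∧ 0 ≤ l + 1 ∧ 0 ≤ k - l
      · exact Or.inr hc
      · left
        have : m = 0 ∨ m = -1 ∨ l = k + 1 := by omega
        rcases this with h | h | h <;> subst h <;> push_cast <;> ring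
    have h8 : ((((m:ℝ)+1)/((n:ℝ)+2)) * (((n:ℝ)-m+1) * (-(((l:ℝ)+1)/((k:ℝ)+2))))) *
        (M m (n-m) p * M l (k-l+1) p) =
        ((((m:ℝ)+1)/((n:ℝ)+2)) * (((n:ℝ)-m+1) * (-(((l:ℝ)+1)/((k:ℝ)+2))))) *
        M (m+l) (n+k-(m+l)+1) p := by
      refine M_mul' _ _ _ _ _ _ _ _ (by ring) (by ring) ?_
      by_cases hc : 0 ≤ m ∧ 0 ≤ n - m ∧ 0 ≤ l ∧ 0 ≤ k - l + 1
      · exact Or.inr hc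
      · left
        have : m = -1 ∨ m = n + 1 ∨ l = -1 := by omega
        rcases this with h | h | h <;> subst h <;> push_cast <;> ring
    have cid2 : (-(((l:ℝ)+1)/((k:ℝ)+2)) * ((l:ℝ) * (((n:ℝ)-m+1)/((n:ℝ)+2))))
        + (-(((l:ℝ)+1)/((k:ℝ)+2)) * (((k:ℝ)-l+1) * (-(((m:ℝ)+1)/((n:ℝ)+2)))))
        + ((((m:ℝ)+1)/((n:ℝ)+2)) * ((m:ℝ) * (((k:ℝ)-l+1)/((k:ℝ)+2))))
        + ((((m:ℝ)+1)/((n:ℝ)+2)) * (((n:ℝ)-m+1) * (-(((l:ℝ)+1)/((k:ℝ)+2)))))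
        = ((n:ℝ)+(k:ℝ)+2) * (((l:ℝ)+1)/((k:ℝ)+2) - ((m:ℝ)+1)/((n:ℝ)+2)) *
          (-(((m:ℝ)+(l:ℝ)+1)/((n:ℝ)+(k:ℝ)+2))) := by
      field_simp
      ring
    linear_combination h5 + h6 + h7 + h8 + cid2 * M (m+l) (n+k-(m+l)+1) p
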